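/- For every integer k ≥ 1, if W satisfies the minimal constraints and the powers W^j for 1 ≤ j ≤ k+1 are integrable, then ∫ W(q,p) · (1 − π·W(q,p))^k dq dp ≥ (1 − μ/2)^k, where μ is the purity of W. -/

import Mathlib

open Real MeasureTheory
open scoped ENNReal NNReal

/-- For every integer `k ≥ 1`, if `W` satisfies the minimal constraints and the powers `W^j`
for `1 ≤ j ≤ k+1` are integrable, then (Jensen's inequality for `x ↦ (1−x)^k`)
`∫ W (1 − π W)^k ≥ (1 − μ/2)^k`, where `μ = 2π ∫ W²` is the purity of `W`. -/
theorem jensen_moment_bound (k : ℕ) (hk : 1 ≤ k)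
    (W : ℝ × ℝ → ℝ) (hmeas : Measurable W)
    (hpos : ∀ z, 0 ≤ W z)
    (hnorm : ∫ z, W z = 1)
    (hbound : ∀ z, Real.pi * W z ≤ 1)
    (hpow : ∀ j : ℕ, 1 ≤ j → j ≤ k + 1 → Integrable (fun z => (W z) ^ j)) :
    (∫ z, W z * (1 - Real.pi * W z) ^ k)
      ≥ (1 - (2 * Real.pi * ∫ z, (W z) ^ 2) / 2) ^ k := by
  have hWint : Integrable W := by
    simpa using hpow 1 le_rfl (by omega)
  have hW2int : Integrable (fun z => (W z) ^ 2) := hpow 2 one_le_two (by omega)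
  have hd : Measurable (fun z => (W z).toNNReal) := hmeas.real_toNNReal
  set ρ : Measure (ℝ × ℝ) := volume.withDensity (fun z => ((W z).toNNReal : ℝ≥0∞)) with hρ
  have hsmul : ∀ (x : ℝ) (z : ℝ × ℝ), (W z).toNNReal • x = W z * x := by
    intro x z
    simp [NNReal.smul_def, Real.coe_toNNReal _ (hpos z)]
  have hcoe : ∀ z : ℝ × ℝ, (((W z).toNNReal : ℝ≥0) : ℝ≥0∞) = ENNReal.ofReal (W z) :=
    fun z => rfl
  have hprob : IsProbabilityMeasure ρ := by
    constructor
    rw [hρ, withDensity_apply _ MeasurableSet.univ, setLIntegral_univ]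
    simp_rw [hcoe]
    rw [← ofReal_integral_eq_lintegral_ofReal hWint (Filter.Eventually.of_forall hpos),
      hnorm, ENNReal.ofReal_one]
  -- convexity of g(x) = (1-x)^k on Icc 0 1
  have hconv : ConvexOn ℝ (Set.Icc (0:ℝ) 1) (fun x => (1 - x) ^ k) := by
    have h1 : ConvexOn ℝ (Set.Ici (0:ℝ)) (fun t : ℝ => t ^ k) := convexOn_pow k
    have h2 := h1.comp_affineMap (AffineMap.lineMap (1:ℝ) (0:ℝ) : ℝ →ᵃ[ℝ] ℝ)
    have h3 : ConvexOn ℝ ((AffineMap.lineMap (1:ℝ) (0:ℝ) : ℝ →ᵃ[ℝ] ℝ) ⁻¹' (Set.Ici (0:ℝ)))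
        (fun x : ℝ => (1 - x) ^ k) := by
      convert h2 using 2 with x
      iterate 4 rfl
      simp [AffineMap.lineMap_apply]
      ring
    refine (h3.subset (fun x hx => ?_) (convex_Icc 0 1))
    simp only [Set.mem_preimage, AffineMap.lineMap_apply, Set.mem_Ici, smul_eq_mul,
      vsub_eq_sub, vadd_eq_add]
    have := hx.2
    linarith
  have hgc : ContinuousOn (fun x : ℝ => (1 - x) ^ k) (Set.Icc (0:ℝ) 1) :=
    (Continuous.pow (by continuity) k).continuousOn
  have hfs : ∀ᵐ z ∂ρ, Real.pi * W z ∈ Set.Icc (0:ℝ) 1 :=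
    Filter.Eventually.of_forall fun z =>
      ⟨mul_nonneg Real.pi_pos.le (hpos z), hbound z⟩
  have hfi : Integrable (fun z => Real.pi * W z) ρ := by
    rw [hρ, integrable_withDensity_iff_integrable_smul hd]
    have : (fun z => (W z).toNNReal • (Real.pi * W z)) = fun z => Real.pi * (W z) ^ 2 := by
      funext z; rw [hsmul]; ring
    rw [this]
    exact hW2int.const_mul _
  have hgi : Integrable ((fun x : ℝ => (1 - x) ^ k) ∘ (fun z => Real.pi * W z)) ρ := by
    rw [hρ, integrable_withDensity_iff_integrable_smul hd]
    simp only [Function.comp]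
    simp_rw [hsmul]
    refine hWint.mono (hmeas.mul ((measurable_const.sub (hmeas.const_mul _)).pow_const k)).aestronglyMeasurable
      (Filter.Eventually.of_forall fun z => ?_)
    have h0 : 0 ≤ 1 - Real.pi * W z := by linarith [hbound z]
    have h1 : 1 - Real.pi * W z ≤ 1 := by
      have := mul_nonneg Real.pi_pos.le (hpos z); linarith
    have hle : (1 - Real.pi * W z) ^ k ≤ 1 := pow_le_one₀ h0 h1
    rw [Real.norm_eq_abs, Real.norm_eq_abs, abs_of_nonneg (hpos z),
      abs_of_nonneg (mul_nonneg (hpos z) (pow_nonneg h0 k))]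
    calc W z * (1 - Real.pi * W z) ^ k ≤ W z * 1 :=
          mul_le_mul_of_nonneg_left hle (hpos z)
      _ = W z := mul_one _
  have hjensen := hconv.map_integral_le hgc isClosed_Icc hfs hfi hgi
  have hint1 : ∫ z, Real.pi * W z ∂ρ = Real.pi * ∫ z, (W z) ^ 2 := by
    rw [hρ, integral_withDensity_eq_integral_smul hd]
    have : (fun z => (W z).toNNReal • (Real.pi * W z)) = fun z => Real.pi * (W z) ^ 2 := by
      funext z; rw [hsmul]; ring
    rw [this, integral_const_mul]
  have hint2 : ∫ z, (1 - Real.pi * W z) ^ k ∂ρ = ∫ z, W z * (1 - Real.pi * W z) ^ k := by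
    rw [hρ, integral_withDensity_eq_integral_smul hd
      (fun z => (1 - Real.pi * W z) ^ k)]
    simp_rw [hsmul]
  rw [hint1] at hjensen
  rw [hint2] at hjensen
  have : (1 - (2 * Real.pi * ∫ z, (W z) ^ 2) / 2) = 1 - Real.pi * ∫ z, (W z) ^ 2 := by ring
  rw [ge_iff_le, this]
  exact hjensen
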